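/- arXiv:2101.09550 — 7 statements merged into one kernel-verified Lean document; each statement's English description precedes it below -/
import Mathlib

section
/- Let n ≥ 1 and let A be an n×n real matrix that is hollow tridiagonal, i.e. A i i = 0 for004 all i and A i j = 0 whenever |i − j| ≥ 2. Then for every natural number t, the trace of the odd power A^(2t+1) vanishes: Tr(A^(2t+1)) = 0. -/
/-- For a hollow tridiagonal real `n × n` matrix `A` (zero diagonal, and
`A i j = 0` when `|i - j| ≥ 2`), all odd power traces vanish: `Tr(A^(2t+1)) = 0`. -/
theorem hollow_tridiagonal_odd_power_trace_zero
    (n : ℕ) (hn : 1 ≤ n) (A : Matrix (Fin n) (Fin n) ℝ)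
    (hdiag : ∀ i : Fin n, A i i = 0)
    (htri : ∀ i j : Fin n, ((i : ℕ) + 2 ≤ (j : ℕ) ∨ (j : ℕ) + 2 ≤ (i : ℕ)) → A i j = 0)
    (t : ℕ) :
    Matrix.trace (A ^ (2 * t + 1)) = 0 := by
  have key : ∀ k (i j : Fin n), ((i : ℕ) + (j : ℕ) + k) % 2 = 1 → (A ^ k) i j = 0 := by
    intro k
    induction k with
    | zero =>
      intro i j h
      have hij : i ≠ j := by
        intro e; subst e; omega
      rw [pow_zero, Matrix.one_apply_ne hij]
    | succ k ih =>
      intro i j h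
      rw [pow_succ, Matrix.mul_apply]
      apply Finset.sum_eq_zero
      intro l _
      by_cases hl : ((i : ℕ) + (l : ℕ) + k) % 2 = 1
      · rw [ih i l hl, zero_mul]
      · have hlj : A l j = 0 := by
          by_cases h2 : ((l : ℕ) + 2 ≤ (j : ℕ) ∨ (j : ℕ) + 2 ≤ (l : ℕ))
          · exact htri l j h2
          · have hval : (l : ℕ) = (j : ℕ) := by omega
            have : l = j := Fin.ext hval
            rw [this]; exact hdiag j
        rw [hlj, mul_zero]
  simp only [Matrix.trace, Matrix.diag]
  apply Finset.sum_eq_zero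
  intro i _
  exact key (2 * t + 1) i i (by omega)
end

section
/- Let n ≥ 1 and let A be an n×n real symmetric tridiagonal matrix whose off-diagonal entries b_i = A_{i,i+1} = A_{i+1,i} are all nonzero (i.e. b_i ≠ 0 for i = 1, …, n−1). Then A has n distinct real eigenvalues; equivalently, the characteristic polynomial of A has n distinct real roots. -/
open Matrix Polynomial

/-- If `A` is tridiagonal with nonzero superdiagonal and `v` is an eigenvector whose first
entry vanishes, then `v = 0`. -/
theorem tri_vanish_aux (n : ℕ) (A : Matrix (Fin n) (Fin n) ℝ)
    (htri : ∀ i j : Fin n, ((i : ℕ) + 2 ≤ (j : ℕ) ∨ (j : ℕ) + 2 ≤ (i : ℕ)) → A i j = 0)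
    (hoff : ∀ i j : Fin n, (j : ℕ) = (i : ℕ) + 1 → A i j ≠ 0)
    (μ : ℝ) (v : Fin n → ℝ) (hv : A *ᵥ v = μ • v)
    (h0 : ∀ h : 0 < n, v ⟨0, h⟩ = 0) : v = 0 := by
  have key : ∀ k, ∀ h : k < n, v ⟨k, h⟩ = 0 := by
    intro k
    induction k using Nat.strong_induction_on with
    | _ k IH =>
      intro hk
      match k, hk with
      | 0, hk => exact h0 hk
      | (m+1), hk =>
        have hm : m < n := Nat.lt_of_succ_lt hk
        have hrow : (A *ᵥ v) ⟨m, hm⟩ = μ * v ⟨m, hm⟩ := by rw [hv]; rfl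
        have hvm : v ⟨m, hm⟩ = 0 := IH m (Nat.lt_succ_self m) hm
        have hsum : (A *ᵥ v) ⟨m, hm⟩ = A ⟨m, hm⟩ ⟨m+1, hk⟩ * v ⟨m+1, hk⟩ := by
          rw [Matrix.mulVec, dotProduct]
          apply Finset.sum_eq_single
          · intro j _ hj
            rcases lt_or_ge (j : ℕ) (m+1) with h | h
            · have : v j = 0 := by
                have := IH (j : ℕ) (by omega) j.2
                simpa [Fin.eta] using this
              rw [this, mul_zero]
            · have hge : m + 2 ≤ (j : ℕ) := by
                rcases Nat.eq_or_lt_of_le h with h' | h'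
                · exact absurd (Fin.ext h'.symm : j = ⟨m+1, hk⟩) hj
                · omega
              rw [htri _ _ (Or.inl hge), zero_mul]
          · intro h; exact absurd (Finset.mem_univ _) h
        have := hrow.symm.trans hsum
        rw [hvm, mul_zero] at this
        exact (mul_eq_zero.mp this.symm).resolve_left (hoff _ _ rfl)
  funext i
  have := key i i.2
  simpa [Fin.eta] using this

/-- The characteristic polynomial is invariant under conjugation. -/
theorem charpoly_conj_aux (n : ℕ) (U D V : Matrix (Fin n) (Fin n) ℝ)
    (h1 : U * V = 1) : (U * D * V).charpoly = D.charpoly := by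
  unfold Matrix.charpoly
  have hUV : C.mapMatrix U * C.mapMatrix V = (1 : Matrix (Fin n) (Fin n) ℝ[X]) := by
    rw [← _root_.map_mul, h1, _root_.map_one]
  have hc : charmatrix (U * D * V) = C.mapMatrix U * charmatrix D * C.mapMatrix V := by
    unfold charmatrix
    rw [_root_.map_mul, _root_.map_mul, mul_sub, sub_mul]
    congr 1
    rw [mul_assoc, (Matrix.scalar_commute X (fun r => Commute.all _ _) (C.mapMatrix V)).eq,
      ← mul_assoc, hUV, one_mul]
  have hdet : U.det * V.det = 1 := by rw [← det_mul, h1, det_one]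
  rw [hc, det_mul, det_mul, ← RingHom.map_det, ← RingHom.map_det, mul_right_comm,
    ← _root_.map_mul, hdet, _root_.map_one, one_mul]

theorem charpoly_diagonal_aux (n : ℕ) (d : Fin n → ℝ) :
    (Matrix.diagonal d).charpoly = ∏ i, (X - C (d i)) := by
  have : charmatrix (Matrix.diagonal d) = Matrix.diagonal (fun i => X - C (d i)) := by
    ext i j
    by_cases h : i = j
    · subst h; simp
    · simp [charmatrix_apply_ne _ _ _ h, Matrix.diagonal_apply_ne _ h]
  rw [Matrix.charpoly, this, det_diagonal]

/-- Injectivity of the eigenvalues, given uniqueness of eigenvectors. -/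
theorem eigenvalues_injective_aux (n : ℕ) (hn : 1 ≤ n) (A : Matrix (Fin n) (Fin n) ℝ)
    (hA : A.IsHermitian)
    (vanish : ∀ (μ : ℝ) (v : Fin n → ℝ), A *ᵥ v = μ • v → (∀ h : 0 < n, v ⟨0, h⟩ = 0) → v = 0) :
    Function.Injective hA.eigenvalues := by
  have hz : 0 < n := hn
  have hon := hA.eigenvectorBasis.orthonormal
  have hnz : ∀ k : Fin n, ⇑(hA.eigenvectorBasis k) ⟨0, hz⟩ ≠ 0 := by
    intro k h
    have h1 : ⇑(hA.eigenvectorBasis k) = 0 :=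
      vanish _ _ (hA.mulVec_eigenvectorBasis k) (fun _ => h)
    have h2 : (hA.eigenvectorBasis k : EuclideanSpace ℝ (Fin n)) = 0 := by
      ext m; exact congrFun h1 m
    have h3 := hon.1 k
    rw [h2] at h3; simp at h3
  intro i j hij
  by_contra hne
  set vi : EuclideanSpace ℝ (Fin n) := hA.eigenvectorBasis i with hvi
  set vj : EuclideanSpace ℝ (Fin n) := hA.eigenvectorBasis j with hvj
  have hAi : A *ᵥ ⇑vi = hA.eigenvalues i • ⇑vi := hA.mulVec_eigenvectorBasis i
  have hAj : A *ᵥ ⇑vj = hA.eigenvalues i • ⇑vj := by rw [hij]; exact hA.mulVec_eigenvectorBasis j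
  have hu : A *ᵥ (vi ⟨0, hz⟩ • ⇑vj - vj ⟨0, hz⟩ • ⇑vi) =
      hA.eigenvalues i • (vi ⟨0, hz⟩ • ⇑vj - vj ⟨0, hz⟩ • ⇑vi) := by
    rw [Matrix.mulVec_sub, Matrix.mulVec_smul, Matrix.mulVec_smul, hAi, hAj, smul_sub,
      smul_comm, smul_comm (vj ⟨0, hz⟩)]
  have hu0 : (vi ⟨0, hz⟩ • ⇑vj - vj ⟨0, hz⟩ • ⇑vi) = 0 := by
    apply vanish _ _ hu
    intro h
    simp [mul_comm]
  have hc : vj = (vj ⟨0, hz⟩ / vi ⟨0, hz⟩) • vi := by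
    have h4 := sub_eq_zero.mp hu0
    ext k
    have hk := congrFun h4 k
    change vi ⟨0, hz⟩ * vj k = vj ⟨0, hz⟩ * vi k at hk
    show vj k = (vj ⟨0, hz⟩ / vi ⟨0, hz⟩) * vi k
    have hvine : vi ⟨0, hz⟩ ≠ 0 := hnz i
    rw [div_mul_eq_mul_div, eq_div_iff hvine]
    linear_combination hk
  have hinner : (inner ℝ vi vj : ℝ) = 0 := hon.2 hne
  have hni : (inner ℝ vi vi : ℝ) = 1 := by
    rw [real_inner_self_eq_norm_sq, hvi, hon.1 i, one_pow]
  rw [hc, real_inner_smul_right, hni, mul_one, _root_.div_eq_zero_iff] at hinner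
  exact hinner.elim (hnz j) (hnz i)

/-- An unreduced real symmetric tridiagonal `n × n` matrix (symmetric,
`A i j = 0` for `|i - j| ≥ 2`, and all off-diagonal entries `A_{i,i+1}` nonzero) has
`n` distinct real eigenvalues, i.e. its characteristic polynomial has `n` distinct
real roots. -/
theorem unreduced_symm_tridiagonal_distinct_eigenvalues
    (n : ℕ) (hn : 1 ≤ n) (A : Matrix (Fin n) (Fin n) ℝ)
    (hsymm : A.IsSymm)
    (htri : ∀ i j : Fin n, ((i : ℕ) + 2 ≤ (j : ℕ) ∨ (j : ℕ) + 2 ≤ (i : ℕ)) → A i j = 0)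
    (hoff : ∀ i j : Fin n, (j : ℕ) = (i : ℕ) + 1 → A i j ≠ 0) :
    A.charpoly.roots.toFinset.card = n := by
  have hA : A.IsHermitian := by rwa [Matrix.IsHermitian, conjTranspose_eq_transpose_of_trivial]
  have hdiag : Matrix.diagonal (RCLike.ofReal ∘ hA.eigenvalues) = Matrix.diagonal hA.eigenvalues := by
    congr 1
  have hcp : A.charpoly = ∏ i, (X - C (hA.eigenvalues i)) := by
    conv_lhs => rw [hA.spectral_theorem, Unitary.conjStarAlgAut_apply]
    rw [charpoly_conj_aux _ _ _ _ (Matrix.mem_unitaryGroup_iff.mp (hA.eigenvectorUnitary).2),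
      hdiag, charpoly_diagonal_aux]
  have hinj : Function.Injective hA.eigenvalues :=
    eigenvalues_injective_aux n hn A hA (tri_vanish_aux n A htri hoff)
  have hroots : A.charpoly.roots = Finset.univ.val.map hA.eigenvalues := by
    rw [hcp, ← Polynomial.roots_multiset_prod_X_sub_C
      (Finset.univ.val.map hA.eigenvalues), Multiset.map_map]
    rfl
  rw [hroots, Multiset.toFinset_card_of_nodup ((Finset.univ.nodup.map hinj))]
  simp
end

section
/- Let J ≥ 1 and K' ≥ 1 be natural numbers, set n = min(J, K') and B = n + 1, and let L(J,K') be the Lamb-shift coupling matrix. Then the trace of its square admits the closed form: Tr(L(J,K')²) = 2·∑_{α=1}^{n} α(J+1−α)(K'+1−α) = (1/2)B⁴ − (1/3)B³(2K' + 2J + 7) + B²(J·K' + 2K' + 2J + 7/2) − (1/3)B(3J·K' + 4J + 4K' + 5). -/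
/-- The Lamb-shift coupling matrix `L(J, K')`: the `(min J K' + 1) × (min J K' + 1)`
real symmetric tridiagonal matrix with zero diagonal and off-diagonal entries
`L_{α,α+1} = L_{α+1,α} = √(α (J+1-α) (K'+1-α))` for `α = 1, …, min J K'` (1-based);
in 0-based indexing the `(i, i+1)` entry is `√((i+1) (J-i) (K'-i))`. -/
noncomputable def lambMatrix (J K' : ℕ) :
    Matrix (Fin (min J K' + 1)) (Fin (min J K' + 1)) ℝ :=
  Matrix.of fun i j =>
    if (j : ℕ) = (i : ℕ) + 1 then
      Real.sqrt (((i : ℕ) + 1) * ((J : ℝ) - (i : ℕ)) * ((K' : ℝ) - (i : ℕ)))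
    else if (i : ℕ) = (j : ℕ) + 1 then
      Real.sqrt (((j : ℕ) + 1) * ((J : ℝ) - (j : ℕ)) * ((K' : ℝ) - (j : ℕ)))
    else 0

namespace LambAux

noncomputable def t (J K' : ℕ) (i : ℕ) : ℝ :=
  ((i : ℝ) + 1) * ((J : ℝ) - (i : ℕ)) * ((K' : ℝ) - (i : ℕ))

noncomputable def F (J K' : ℕ) (i j : ℕ) : ℝ :=
  if j = i + 1 then
    Real.sqrt (((i : ℕ) + 1) * ((J : ℝ) - (i : ℕ)) * ((K' : ℝ) - (i : ℕ)))
  else if i = j + 1 then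
    Real.sqrt (((j : ℕ) + 1) * ((J : ℝ) - (j : ℕ)) * ((K' : ℝ) - (j : ℕ)))
  else 0

lemma t_nonneg (J K' : ℕ) (m : ℕ) (hJ : m + 1 ≤ J) (hK : m + 1 ≤ K') :
    0 ≤ t J K' m := by
  have h1 : (m : ℝ) + 1 ≤ (J : ℝ) := by exact_mod_cast hJ
  have h2 : (m : ℝ) + 1 ≤ (K' : ℝ) := by exact_mod_cast hK
  unfold t
  have h3 : (0:ℝ) ≤ (J : ℝ) - (m : ℕ) := by linarith
  have h4 : (0:ℝ) ≤ (K' : ℝ) - (m : ℕ) := by linarith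
  have h5 : (0:ℝ) ≤ (m : ℝ) + 1 := by positivity
  exact mul_nonneg (mul_nonneg h5 h3) h4

lemma F_mul_self (J K' : ℕ) (m : ℕ) (hJ : m + 1 ≤ J) (hK : m + 1 ≤ K') :
    F J K' m (m + 1) * F J K' (m + 1) m = t J K' m := by
  have h := t_nonneg J K' m hJ hK
  unfold F
  rw [if_pos rfl, if_neg (show ¬ m = m + 1 + 1 by omega), if_pos rfl]
  exact Real.mul_self_sqrt h

lemma sum_key (J K' : ℕ) : ∀ m, m ≤ min J K' →
    ∑ i ∈ Finset.range (m + 1), ∑ j ∈ Finset.range (m + 1),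
      F J K' i j * F J K' j i = 2 * ∑ i ∈ Finset.range m, t J K' i := by
  intro m
  induction m with
  | zero => intro _; simp [F]
  | succ m ih =>
    intro hm
    have hm' : m ≤ min J K' := by omega
    have hJ : m + 1 ≤ J := by omega
    have hK : m + 1 ≤ K' := by omega
    rw [Finset.sum_range_succ]
    have hrow : ∀ i ∈ Finset.range (m + 1),
        (∑ j ∈ Finset.range (m + 2), F J K' i j * F J K' j i)
          = (∑ j ∈ Finset.range (m + 1), F J K' i j * F J K' j i)
            + (if i = m then t J K' m else 0) := by
      intro i hi
      rw [Finset.sum_range_succ]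
      congr 1
      rcases eq_or_ne i m with h | hne
      · rw [if_pos h, h]; exact F_mul_self J K' m hJ hK
      · rw [if_neg hne]
        have hi' : i < m + 1 := Finset.mem_range.mp hi
        have h1 : ¬ (m + 1 = i + 1) := by omega
        have h2 : ¬ (i = m + 2) := by omega
        unfold F
        rw [if_neg h1, if_neg h2, zero_mul]
    have hind : ∑ i ∈ Finset.range (m + 1), (if i = m then t J K' m else 0)
        = t J K' m := by simp
    rw [Finset.sum_congr rfl hrow, Finset.sum_add_distrib, hind, ih hm']
    have hlast : ∑ j ∈ Finset.range (m + 2), F J K' (m + 1) j * F J K' j (m + 1)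
        = t J K' m := by
      rw [Finset.sum_range_succ]
      have hd : F J K' (m + 1) (m + 1) * F J K' (m + 1) (m + 1) = 0 := by
        unfold F
        rw [if_neg (by omega), if_neg (by omega), zero_mul]
      rw [hd, add_zero]
      have : ∀ j ∈ Finset.range (m + 1),
          F J K' (m + 1) j * F J K' j (m + 1) = if j = m then t J K' m else 0 := by
        intro j hj
        rcases eq_or_ne j m with h | hne
        · rw [if_pos h, h, mul_comm]; exact F_mul_self J K' m hJ hK
        · rw [if_neg hne]
          have hj' : j < m + 1 := Finset.mem_range.mp hj
          have h1 : ¬ (j = m + 2) := by omega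
          have h2 : ¬ (m + 1 = j + 1) := by omega
          unfold F
          rw [if_neg h1, if_neg h2, zero_mul]
      have hind2 : ∑ j ∈ Finset.range (m + 1), (if j = m then t J K' m else 0)
          = t J K' m := by simp
      rw [Finset.sum_congr rfl this, hind2]
    rw [hlast, Finset.sum_range_succ]
    ring

lemma poly_lemma (x y : ℝ) : ∀ n : ℕ,
    2 * ∑ α ∈ Finset.Icc 1 n, (α : ℝ) * (x + 1 - α) * (y + 1 - α) =
      (1 / 2) * ((n : ℝ) + 1) ^ 4
        - (1 / 3) * ((n : ℝ) + 1) ^ 3 * (2 * y + 2 * x + 7)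
        + ((n : ℝ) + 1) ^ 2 * (x * y + 2 * y + 2 * x + 7 / 2)
        - (1 / 3) * ((n : ℝ) + 1) * (3 * x * y + 4 * x + 4 * y + 5) := by
  intro n
  induction n with
  | zero => simp; ring
  | succ n ih =>
    rw [Finset.sum_Icc_succ_top (by omega : 1 ≤ n + 1)]
    push_cast
    linear_combination ih

end LambAux

/-- closed form for the trace of the square of the Lamb-shift
coupling matrix, with `n = min J K'` and `B = n + 1`:
`Tr(L(J,K')²) = 2 ∑_{α=1}^{n} α (J+1-α) (K'+1-α)`
`= (1/2)B⁴ - (1/3)B³(2K'+2J+7) + B²(JK'+2K'+2J+7/2) - (1/3)B(3JK'+4J+4K'+5)`. -/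
theorem trace_sq_lambMatrix (J K' : ℕ) (hJ : 1 ≤ J) (hK : 1 ≤ K') :
    Matrix.trace (lambMatrix J K' * lambMatrix J K') =
        2 * ∑ α ∈ Finset.Icc 1 (min J K'),
          (α : ℝ) * ((J : ℝ) + 1 - α) * ((K' : ℝ) + 1 - α) ∧
      Matrix.trace (lambMatrix J K' * lambMatrix J K') =
        (1 / 2) * ((min J K' : ℝ) + 1) ^ 4
          - (1 / 3) * ((min J K' : ℝ) + 1) ^ 3 * (2 * (K' : ℝ) + 2 * (J : ℝ) + 7)
          + ((min J K' : ℝ) + 1) ^ 2 *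
              ((J : ℝ) * (K' : ℝ) + 2 * (K' : ℝ) + 2 * (J : ℝ) + 7 / 2)
          - (1 / 3) * ((min J K' : ℝ) + 1) *
              (3 * (J : ℝ) * (K' : ℝ) + 4 * (J : ℝ) + 4 * (K' : ℝ) + 5) := by
  set n := min J K' with hn
  have key : Matrix.trace (lambMatrix J K' * lambMatrix J K') =
      ∑ i ∈ Finset.range (n + 1), ∑ j ∈ Finset.range (n + 1),
        LambAux.F J K' i j * LambAux.F J K' j i := by
    rw [Matrix.trace]
    simp only [Matrix.diag, Matrix.mul_apply]
    rw [← Fin.sum_univ_eq_sum_range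
      (fun i => ∑ j ∈ Finset.range (n + 1), LambAux.F J K' i j * LambAux.F J K' j i)]
    refine Finset.sum_congr rfl fun i _ => ?_
    rw [← Fin.sum_univ_eq_sum_range
      (fun j => LambAux.F J K' (i : ℕ) j * LambAux.F J K' j (i : ℕ))]
    rfl
  have h1 : Matrix.trace (lambMatrix J K' * lambMatrix J K') =
      2 * ∑ α ∈ Finset.Icc 1 n,
        (α : ℝ) * ((J : ℝ) + 1 - α) * ((K' : ℝ) + 1 - α) := by
    rw [key, LambAux.sum_key J K' n le_rfl]
    congr 1
    rw [← Finset.Ico_add_one_right_eq_Icc, Finset.sum_Ico_eq_sum_range]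
    refine Finset.sum_congr rfl fun i _ => ?_
    unfold LambAux.t
    push_cast
    ring
  have hcast : min ((J : ℕ) : ℝ) ((K' : ℕ) : ℝ) = ((n : ℕ) : ℝ) := by
    rw [hn, Nat.cast_min]
  refine ⟨h1, ?_⟩
  rw [hcast, h1, LambAux.poly_lemma]
end

section
/- Let J ≥ 1 and K' be natural numbers with K' ≥ J (the saturated regime, corresponding to excitation number k ≥ N/2 + j), so that the Lamb-shift coupling matrix L(J,K') has size J+1. Then Tr(L(J,K')²) = (1/6)·J·(J+1)·(J+2)·(2K' + 1 − J). In particular, for fixed J the variance of the Lamb-shift eigenvalues, Var(Λ(J,K')) = Tr(L(J,K')²)/(J+1), is a linear function of K'. -/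
lemma sum_cubic_closed (x y : ℝ) (n : ℕ) :
    ∑ α ∈ Finset.range n, (((α : ℝ) + 1) * (x - α) * (y - α))
      = x * y * n * (n + 1) / 2 - (x + y) * ((n : ℝ) - 1) * n * (n + 1) / 3
        + ((n : ℝ) - 1) ^ 2 * (n : ℝ) ^ 2 / 4 + ((n : ℝ) - 1) * n * (2 * n - 1) / 6 := by
  induction n with
  | zero => simp
  | succ n ih =>
    rw [Finset.sum_range_succ, ih]
    push_cast
    ring

/-- in the saturated regime `K' ≥ J ≥ 1` (where the block has size `J + 1`),
`Tr(L(J,K')²) = (1/6) J (J+1) (J+2) (2K' + 1 - J)`; in particular, for fixed `J` the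
variance `Var(Λ(J,K')) = Tr(L(J,K')²)/(J+1)` of the Lamb-shift eigenvalues is a linear
function of `K'`. -/
theorem trace_sq_lambMatrix_saturated (J : ℕ) (hJ : 1 ≤ J) :
    (∀ K' : ℕ, J ≤ K' →
        Matrix.trace (lambMatrix J K' * lambMatrix J K') =
          (1 / 6) * (J : ℝ) * ((J : ℝ) + 1) * ((J : ℝ) + 2) *
            (2 * (K' : ℝ) + 1 - (J : ℝ))) ∧
      ∃ a b : ℝ, ∀ K' : ℕ, J ≤ K' →
        Matrix.trace (lambMatrix J K' * lambMatrix J K') / ((J : ℝ) + 1) =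
          a * (K' : ℝ) + b := by
  have key : ∀ K' : ℕ, J ≤ K' →
      Matrix.trace (lambMatrix J K' * lambMatrix J K') =
        (1 / 6) * (J : ℝ) * ((J : ℝ) + 1) * ((J : ℝ) + 2) *
          (2 * (K' : ℝ) + 1 - (J : ℝ)) := by
    intro K' hK
    have hn : min J K' = J := min_eq_left hK
    set n := min J K' with hndef
    set q : ℕ → ℝ := fun α =>
      Real.sqrt (((α : ℝ) + 1) * ((J : ℝ) - α) * ((K' : ℝ) - α)) with hq
    have hL : ∀ i j : Fin (n + 1), lambMatrix J K' i j =
        if (j : ℕ) = (i : ℕ) + 1 then q (i : ℕ)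
        else if (i : ℕ) = (j : ℕ) + 1 then q (j : ℕ) else 0 := by
      intro i j
      simp only [lambMatrix, Matrix.of_apply, hq]
    have h1 : Matrix.trace (lambMatrix J K' * lambMatrix J K') =
        ∑ i : Fin (n + 1), ∑ j : Fin (n + 1),
          lambMatrix J K' i j * lambMatrix J K' j i := by
      simp [Matrix.trace, Matrix.mul_apply, Matrix.diag]
      rfl
    have h2 : ∀ i j : Fin (n + 1),
        lambMatrix J K' i j * lambMatrix J K' j i =
          (if (j : ℕ) = (i : ℕ) + 1 then q (i : ℕ) ^ 2 else 0) +
          (if (i : ℕ) = (j : ℕ) + 1 then q (j : ℕ) ^ 2 else 0) := by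
      intro i j
      rw [hL, hL]
      split_ifs with ha hb hc <;> [(exfalso; omega); ring; ring; ring]
    have inner1 : ∀ i : Fin (n + 1),
        (∑ j : Fin (n + 1), if (j : ℕ) = (i : ℕ) + 1 then q (i : ℕ) ^ 2 else 0)
          = if (i : ℕ) < n then q (i : ℕ) ^ 2 else 0 := by
      intro i
      rw [Fin.sum_univ_eq_sum_range (fun j => if j = (i : ℕ) + 1 then q (i : ℕ) ^ 2 else 0)]
      rw [Finset.sum_ite_eq' (Finset.range (n + 1)) ((i : ℕ) + 1) (fun _ => q (i : ℕ) ^ 2)]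
      simp [Finset.mem_range, Nat.add_lt_add_iff_right]
    have inner2 : ∀ j : Fin (n + 1),
        (∑ i : Fin (n + 1), if (i : ℕ) = (j : ℕ) + 1 then q (j : ℕ) ^ 2 else 0)
          = if (j : ℕ) < n then q (j : ℕ) ^ 2 else 0 := by
      intro j
      rw [Fin.sum_univ_eq_sum_range (fun i => if i = (j : ℕ) + 1 then q (j : ℕ) ^ 2 else 0)]
      rw [Finset.sum_ite_eq' (Finset.range (n + 1)) ((j : ℕ) + 1) (fun _ => q (j : ℕ) ^ 2)]
      simp [Finset.mem_range, Nat.add_lt_add_iff_right]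
    have outer : (∑ i : Fin (n + 1), if (i : ℕ) < n then q (i : ℕ) ^ 2 else 0)
        = ∑ i ∈ Finset.range n, q i ^ 2 := by
      rw [Fin.sum_univ_eq_sum_range (fun i => if i < n then q i ^ 2 else 0)]
      rw [Finset.sum_range_succ]
      simp only [lt_irrefl, if_false, add_zero]
      refine Finset.sum_congr rfl fun x hx => ?_
      rw [if_pos (Finset.mem_range.mp hx)]
    have h3 : Matrix.trace (lambMatrix J K' * lambMatrix J K') =
        2 * ∑ i ∈ Finset.range n, q i ^ 2 := by
      rw [h1]
      calc ∑ i : Fin (n + 1), ∑ j : Fin (n + 1),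
            lambMatrix J K' i j * lambMatrix J K' j i
          = ∑ i : Fin (n + 1), ((∑ j : Fin (n + 1),
              if (j : ℕ) = (i : ℕ) + 1 then q (i : ℕ) ^ 2 else 0) +
            (∑ j : Fin (n + 1),
              if (i : ℕ) = (j : ℕ) + 1 then q (j : ℕ) ^ 2 else 0)) := by
            refine Finset.sum_congr rfl fun i _ => ?_
            rw [← Finset.sum_add_distrib]
            exact Finset.sum_congr rfl fun j _ => h2 i j
        _ = (∑ i : Fin (n + 1), ∑ j : Fin (n + 1),
              if (j : ℕ) = (i : ℕ) + 1 then q (i : ℕ) ^ 2 else 0) +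
            (∑ i : Fin (n + 1), ∑ j : Fin (n + 1),
              if (i : ℕ) = (j : ℕ) + 1 then q (j : ℕ) ^ 2 else 0) :=
            Finset.sum_add_distrib
        _ = (∑ i : Fin (n + 1), if (i : ℕ) < n then q (i : ℕ) ^ 2 else 0) +
            (∑ j : Fin (n + 1), if (j : ℕ) < n then q (j : ℕ) ^ 2 else 0) := by
            rw [Finset.sum_congr rfl fun i _ => inner1 i]
            rw [Finset.sum_comm]
            rw [Finset.sum_congr rfl fun j _ => inner2 j]
        _ = 2 * ∑ i ∈ Finset.range n, q i ^ 2 := by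
            rw [outer]; ring
    have h4 : ∀ i ∈ Finset.range n, q i ^ 2 =
        ((i : ℝ) + 1) * ((J : ℝ) - i) * ((K' : ℝ) - i) := by
      intro i hi
      have hi' : i < J := by rw [← hn]; exact Finset.mem_range.mp hi
      have hiJ : (i : ℝ) ≤ (J : ℝ) := by exact_mod_cast hi'.le
      have hiK : (i : ℝ) ≤ (K' : ℝ) := by
        exact_mod_cast (le_trans hi'.le hK)
      have hpos : 0 ≤ ((i : ℝ) + 1) * ((J : ℝ) - i) * ((K' : ℝ) - i) := by
        apply mul_nonneg (mul_nonneg (by positivity) (by linarith)) (by linarith)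
      rw [hq]
      exact Real.sq_sqrt hpos
    rw [h3, Finset.sum_congr rfl h4, hn, sum_cubic_closed (J : ℝ) (K' : ℝ) J]
    ring
  refine ⟨key, (J : ℝ) * ((J : ℝ) + 2) / 3, (J : ℝ) * ((J : ℝ) + 2) * (1 - J) / 6,
    fun K' hK => ?_⟩
  rw [key K' hK]
  have hJ1 : (J : ℝ) + 1 ≠ 0 := by positivity
  field_simp
  ring
end

section
/- Let J ≥ 1 and K' ≥ 1 be natural numbers and let L(J,K') be the Lamb-shift coupling matrix. Then every eigenvalue λ of L(J,K') satisfies λ² ≤ (2/3)·(J+1)·(K'+1)·(J + K' + 2); equivalently, the spectral radius of L(J,K') is at most (2/√3)·√((J+1)(K'+1)(J+K'+2)/2). -/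
lemma cube_bound (A B s : ℝ) (hA : 2 ≤ A) (hB : 2 ≤ B)
    (hs1 : 1 ≤ s) (hsA : s ≤ A - 1) (hsB : s ≤ B - 1) :
    s * (A - s) * (B - s) ≤ A * B * (A + B) / 6 := by
  nlinarith [sq_nonneg (A - s), sq_nonneg (B - s), sq_nonneg (A + B - 3*s),
    mul_nonneg (sub_nonneg.2 hsA) (sub_nonneg.2 hsB), sq_nonneg (A - B),
    mul_pos (lt_of_lt_of_le one_pos hs1) (lt_of_lt_of_le one_pos hs1)]

lemma sum_ite_le {α : Type*} [Fintype α] (p : α → Prop) [DecidablePred p]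
    (hp : ∀ a b, p a → p b → a = b) (x : ℝ) (hx : 0 ≤ x) :
    ∑ a, (if p a then x else 0) ≤ x := by
  rw [Finset.sum_ite, Finset.sum_const, Finset.sum_const_zero, add_zero]
  have hcard : (Finset.univ.filter p).card ≤ 1 := by
    apply Finset.card_le_one.2
    intro a ha b hb
    exact hp a b (Finset.mem_filter.1 ha).2 (Finset.mem_filter.1 hb).2
  calc (Finset.univ.filter p).card • x ≤ 1 • x := by
        apply smul_le_smul_of_nonneg_right _ hx
        exact_mod_cast hcard
    _ = x := one_smul _ _



/-- every eigenvalue `λ` of the Lamb-shift coupling matrix `L(J,K')`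
satisfies `λ² ≤ (2/3) (J+1) (K'+1) (J+K'+2)`, i.e. the spectral radius is at most
`(2/√3) √((J+1)(K'+1)(J+K'+2)/2)`. -/
theorem lambMatrix_eigenvalue_sq_bound
    (J K' : ℕ) (hJ : 1 ≤ J) (hK : 1 ≤ K')
    (lam : ℝ) (v : Fin (min J K' + 1) → ℝ) (hv : v ≠ 0)
    (heig : (lambMatrix J K').mulVec v = lam • v) :
    lam ^ 2 ≤ (2 / 3) * ((J : ℝ) + 1) * ((K' : ℝ) + 1) * ((J : ℝ) + (K' : ℝ) + 2) := by
  have hM0 : (0 : ℝ) ≤ ((J : ℝ) + 1) * ((K' : ℝ) + 1) * ((J : ℝ) + (K' : ℝ) + 2) / 6 := by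
    positivity
  set M : ℝ := ((J : ℝ) + 1) * ((K' : ℝ) + 1) * ((J : ℝ) + (K' : ℝ) + 2) / 6 with hM
  have hA : (2 : ℝ) ≤ (J : ℝ) + 1 := by exact_mod_cast Nat.succ_le_succ hJ
  have hB : (2 : ℝ) ≤ (K' : ℝ) + 1 := by exact_mod_cast Nat.succ_le_succ hK
  have key : ∀ m : ℕ, m + 1 ≤ min J K' →
      Real.sqrt (((m : ℝ) + 1) * ((J : ℝ) - m) * ((K' : ℝ) - m)) ≤ Real.sqrt M := by
    intro m hm
    apply Real.sqrt_le_sqrt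
    have hmJ : (m : ℝ) + 1 ≤ (J : ℝ) := by
      exact_mod_cast le_trans hm (min_le_left J K')
    have hmK : (m : ℝ) + 1 ≤ (K' : ℝ) := by
      exact_mod_cast le_trans hm (min_le_right J K')
    have := cube_bound ((J : ℝ) + 1) ((K' : ℝ) + 1) ((m : ℝ) + 1) hA hB
      (by linarith [Nat.cast_nonneg (α := ℝ) m]) (by linarith) (by linarith)
    calc ((m : ℝ) + 1) * ((J : ℝ) - m) * ((K' : ℝ) - m)
        = ((m : ℝ) + 1) * (((J : ℝ) + 1) - ((m : ℝ) + 1)) * (((K' : ℝ) + 1) - ((m : ℝ) + 1)) := by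
          ring
      _ ≤ ((J : ℝ) + 1) * ((K' : ℝ) + 1) * (((J : ℝ) + 1) + ((K' : ℝ) + 1)) / 6 := this
      _ = M := by rw [hM]; ring
  have entry_bd : ∀ i j : Fin (min J K' + 1),
      |lambMatrix J K' i j| ≤
        (if (j : ℕ) = (i : ℕ) + 1 then Real.sqrt M else 0) +
        (if (i : ℕ) = (j : ℕ) + 1 then Real.sqrt M else 0) := by
    intro i j
    unfold lambMatrix
    simp only [Matrix.of_apply]
    split_ifs with h1 h2 h2
    · omega
    · rw [abs_of_nonneg (Real.sqrt_nonneg _), add_zero]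
      exact key i (by omega)
    · rw [abs_of_nonneg (Real.sqrt_nonneg _), zero_add]
      exact key j (by omega)
    · simp
  obtain ⟨i, -, hi⟩ := Finset.exists_max_image (Finset.univ : Finset (Fin (min J K' + 1)))
    (fun k => |v k|) ⟨0, Finset.mem_univ 0⟩
  have hvi : 0 < |v i| := by
    rcases Function.ne_iff.1 hv with ⟨k, hk⟩
    exact lt_of_lt_of_le (abs_pos.2 hk) (hi k (Finset.mem_univ k))
  have heq : ∑ j : Fin (min J K' + 1), lambMatrix J K' i j * v j = lam * v i := by
    have := congrFun heig i
    simpa [Matrix.mulVec, dotProduct] using this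
  have habs : |lam| * |v i| ≤ 2 * Real.sqrt M * |v i| := by
    calc |lam| * |v i| = |lam * v i| := (abs_mul _ _).symm
      _ = |∑ j : Fin (min J K' + 1), lambMatrix J K' i j * v j| := by rw [heq]
      _ ≤ ∑ j : Fin (min J K' + 1), |lambMatrix J K' i j * v j| :=
          Finset.abs_sum_le_sum_abs _ _
      _ ≤ ∑ j : Fin (min J K' + 1),
            ((if (j : ℕ) = (i : ℕ) + 1 then Real.sqrt M else 0) +
             (if (i : ℕ) = (j : ℕ) + 1 then Real.sqrt M else 0)) * |v i| := by
          apply Finset.sum_le_sum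
          intro j _
          rw [abs_mul]
          have h1 := entry_bd i j
          have h2 : |v j| ≤ |v i| := hi j (Finset.mem_univ j)
          have h3 : (0 : ℝ) ≤ |lambMatrix J K' i j| := abs_nonneg _
          nlinarith [abs_nonneg (v j)]
      _ = (∑ j : Fin (min J K' + 1),
            ((if (j : ℕ) = (i : ℕ) + 1 then Real.sqrt M else 0) +
             (if (i : ℕ) = (j : ℕ) + 1 then Real.sqrt M else 0))) * |v i| := by
          rw [Finset.sum_mul]
      _ ≤ 2 * Real.sqrt M * |v i| := by
          apply mul_le_mul_of_nonneg_right _ (abs_nonneg _)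
          rw [Finset.sum_add_distrib]
          have s1 : ∑ j : Fin (min J K' + 1),
              (if (j : ℕ) = (i : ℕ) + 1 then Real.sqrt M else 0) ≤ Real.sqrt M := by
            apply sum_ite_le _ _ _ (Real.sqrt_nonneg M)
            intro a b ha hb
            exact Fin.ext (by omega)
          have s2 : ∑ j : Fin (min J K' + 1),
              (if (i : ℕ) = (j : ℕ) + 1 then Real.sqrt M else 0) ≤ Real.sqrt M := by
            apply sum_ite_le _ _ _ (Real.sqrt_nonneg M)
            intro a b ha hb
            exact Fin.ext (by omega)
          linarith
  have hlam : |lam| ≤ 2 * Real.sqrt M := le_of_mul_le_mul_right habs hvi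
  have hsq : lam ^ 2 ≤ (2 * Real.sqrt M) ^ 2 := by
    rw [← sq_abs lam]
    exact pow_le_pow_left₀ (abs_nonneg lam) hlam 2
  calc lam ^ 2 ≤ (2 * Real.sqrt M) ^ 2 := hsq
    _ = 4 * M := by rw [mul_pow, Real.sq_sqrt hM0]; ring
    _ = (2 / 3) * ((J : ℝ) + 1) * ((K' : ℝ) + 1) * ((J : ℝ) + (K' : ℝ) + 2) := by
        rw [hM]; ring
end

section
/- There exists a constant C > 0 such that for every even natural number N ≥ 2 and every integer j with 0 ≤ j ≤ N/2, the degeneracy d_j = N!(2j+1)/((N/2−j)!(N/2+j+1)!) satisfies d_j ≤ C · 2^N / N. That is, the fraction of the 2^N spin states carried by any single angular momentum subspace (even the maximally degenerate one) is O(1/N) uniformly in j. -/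
open Nat

/-- Bernoulli-type bound: `(m/(m+2))^K ≤ m/(m+2K)` in cross-multiplied form. -/
lemma deg_bern (m K : ℕ) : m ^ K * (m + 2 * K) ≤ (m + 2) ^ K * m := by
  induction K with
  | zero => simp
  | succ K ih =>
    have hp : m ^ K ≤ (m + 2) ^ K := Nat.pow_le_pow_left (by omega) K
    calc m ^ (K+1) * (m + 2*(K+1))
        = m * (m ^ K * (m + 2*K)) + 2 * (m ^ K * m) := by ring
      _ ≤ m * ((m+2)^K * m) + 2 * ((m+2)^K * m) :=
          Nat.add_le_add (Nat.mul_le_mul_left _ ih)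
            (Nat.mul_le_mul_left _ (Nat.mul_le_mul_right _ hp))
      _ = (m+2)^(K+1) * m := by ring

/-- Ratio decay: `(m+1-i)/(m+1+i) ≤ (m/(m+2))^i` in cross-multiplied form. -/
lemma deg_stepA (m : ℕ) : ∀ i ≤ m, (m + 1 - i) * (m + 2) ^ i ≤ m ^ i * (m + 1 + i) := by
  intro i hi
  induction i with
  | zero => simp
  | succ i ih =>
    have hi' : i ≤ m := by omega
    have IH := ih hi'
    obtain ⟨a, ha⟩ : ∃ a, m = a + i + 1 := ⟨m - i - 1, by omega⟩
    have h1 : m + 1 - i = a + 2 := by omega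
    have h2 : m + 1 - (i + 1) = a + 1 := by omega
    subst ha
    rw [h1] at IH
    rw [h2]
    have cross : (a+1) * ((a+i+1) + 2) * ((a+i+1) + 1 + i)
        ≤ (a+i+1) * ((a+i+1) + 2 + i) * (a+2) := by nlinarith [sq_nonneg i, sq_nonneg a]
    have key : (a + 1) * ((a+i+1) + 2) ^ (i + 1) * ((a+i+1) + 1 + i)
        ≤ (a+i+1) ^ (i + 1) * ((a+i+1) + 1 + (i+1)) * ((a+i+1) + 1 + i) := by
      calc (a + 1) * ((a+i+1) + 2) ^ (i + 1) * ((a+i+1) + 1 + i)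
          = ((a+1) * ((a+i+1)+2) * ((a+i+1)+1+i)) * ((a+i+1) + 2) ^ i := by ring
        _ ≤ ((a+i+1) * ((a+i+1) + 2 + i) * (a+2)) * ((a+i+1) + 2) ^ i :=
            Nat.mul_le_mul_right _ cross
        _ = ((a+i+1) * ((a+i+1) + 2 + i)) * ((a+2) * ((a+i+1) + 2) ^ i) := by ring
        _ ≤ ((a+i+1) * ((a+i+1) + 2 + i)) * ((a+i+1) ^ i * ((a+i+1) + 1 + i)) :=
            Nat.mul_le_mul_left _ IH
        _ = (a+i+1) ^ (i + 1) * ((a+i+1) + 1 + (i+1)) * ((a+i+1) + 1 + i) := by ring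
    exact Nat.le_of_mul_le_mul_right key (by omega)

/-- Squared product bound:
`(m!(m+1)!)² (m+2)^(j(j+1)) ≤ m^(j(j+1)) ((m-j)!(m+1+j)!)²`. -/
lemma deg_prodB (m : ℕ) : ∀ j ≤ m,
    (m ! * (m+1)!) ^ 2 * (m + 2) ^ (j * (j+1))
      ≤ m ^ (j * (j+1)) * ((m - j)! * (m + 1 + j)!) ^ 2 := by
  intro j hj
  induction j with
  | zero => simp
  | succ j ih =>
    have hj' : j ≤ m := by omega
    have IH := ih hj'
    obtain ⟨a, ha⟩ : ∃ a, m = a + j + 1 := ⟨m - j - 1, by omega⟩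
    have h1 : m - j = a + 1 := by omega
    have h2 : m - (j + 1) = a := by omega
    have h3 : m + 1 - (j + 1) = a + 1 := by omega
    have hA := deg_stepA m (j+1) hj
    rw [h1] at IH
    rw [h3] at hA
    rw [h2]
    have hfac1 : (a + 1)! = (a+1) * a ! := Nat.factorial_succ a
    have hfac2 : (m + 2 + j)! = (m + 2 + j) * (m + 1 + j)! := by
      have : m + 2 + j = (m + 1 + j) + 1 := by omega
      rw [this, Nat.factorial_succ]
    have epow : ∀ x : ℕ, x ^ ((j+1) * (j+2)) = x ^ (j * (j+1)) * (x ^ (j+1))^2 := by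
      intro x
      rw [← pow_mul, ← pow_add]
      congr 1
      ring
    have e1 : m + 1 + (j + 1) = m + 2 + j := by omega
    have key : (m ! * (m+1)!) ^ 2 * (m + 2) ^ ((j+1) * (j+2)) * (a+1)^2
        ≤ m ^ ((j+1) * (j+2)) * (a ! * (m + 1 + (j+1))!) ^ 2 * (a+1)^2 := by
      calc (m ! * (m+1)!) ^ 2 * (m + 2) ^ ((j+1) * (j+2)) * (a+1)^2
          = ((m ! * (m+1)!) ^ 2 * (m + 2) ^ (j * (j+1))) * ((a+1) * (m+2)^(j+1))^2 := by
            rw [epow]; ring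
        _ ≤ (m ^ (j * (j+1)) * ((a + 1)! * (m + 1 + j)!) ^ 2) * ((a+1) * (m+2)^(j+1))^2 :=
            Nat.mul_le_mul_right _ IH
        _ ≤ (m ^ (j * (j+1)) * ((a + 1)! * (m + 1 + j)!) ^ 2) * (m^(j+1) * (m + 1 + (j+1)))^2 :=
            Nat.mul_le_mul_left _ (Nat.pow_le_pow_left hA 2)
        _ = m ^ ((j+1) * (j+2)) * (a ! * (m + 1 + (j+1))!) ^ 2 * (a+1)^2 := by
            rw [epow, hfac1, e1, hfac2]; ring
    exact Nat.le_of_mul_le_mul_right key (by positivity)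

/-- `Q` bound: `(2j+1)² (m!(m+1)!)² ≤ (2m+1) ((m-j)!(m+1+j)!)²`. -/
lemma deg_QN (m j : ℕ) (hm : 1 ≤ m) (hj : j ≤ m) :
    (2*j+1)^2 * (m ! * (m+1)!) ^ 2 ≤ (2*m+1) * ((m - j)! * (m + 1 + j)!) ^ 2 := by
  set K := j * (j + 1) with hK
  set F := (m - j)! * (m + 1 + j)! with hF
  have hB := deg_prodB m j hj
  have hc := deg_bern m K
  have hmain : ((2*j+1)^2 * (m ! * (m+1)!) ^ 2) * ((m+2)^K * (m + 2*K))
      ≤ ((2*m+1) * F ^ 2) * ((m+2)^K * (m + 2*K)) := by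
    calc ((2*j+1)^2 * (m ! * (m+1)!) ^ 2) * ((m+2)^K * (m + 2*K))
        = (2*j+1)^2 * ((m ! * (m+1)!) ^ 2 * (m+2)^K) * (m + 2*K) := by ring
      _ ≤ (2*j+1)^2 * (m ^ K * F ^ 2) * (m + 2*K) :=
          Nat.mul_le_mul_right _ (Nat.mul_le_mul_left _ hB)
      _ = (2*j+1)^2 * (m ^ K * (m + 2*K)) * F ^ 2 := by ring
      _ ≤ (2*j+1)^2 * ((m+2)^K * m) * F ^ 2 :=
          Nat.mul_le_mul_right _ (Nat.mul_le_mul_left _ hc)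
      _ = ((2*j+1)^2 * m) * ((m+2)^K * F ^ 2) := by ring
      _ ≤ ((2*m+1) * (m + 2*K)) * ((m+2)^K * F ^ 2) := by
          have : (2*j+1)^2 * m ≤ (2*m+1) * (m + 2*K) := by
            have : (2*j+1)^2 = 4*K + 1 := by rw [hK]; ring
            nlinarith [sq_nonneg m]
          exact Nat.mul_le_mul_right _ this
      _ = ((2*m+1) * F ^ 2) * ((m+2)^K * (m + 2*K)) := by ring
  exact Nat.le_of_mul_le_mul_right hmain (by positivity)

/-- Wallis-type bound: `(2m+1)·C(2m,m)² ≤ 16^m`. -/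
lemma deg_wallis (m : ℕ) : (2*m+1) * centralBinom m ^ 2 ≤ 16 ^ m := by
  induction m with
  | zero => simp [centralBinom]
  | succ m ih =>
    have h := Nat.succ_mul_centralBinom_succ m
    have key : (2*(m+1)+1) * centralBinom (m+1) ^ 2 * (m+1)^2
        ≤ 16 ^ (m+1) * (m+1)^2 := by
      calc (2*(m+1)+1) * centralBinom (m+1) ^ 2 * (m+1)^2
          = (2*(m+1)+1) * ((m+1) * centralBinom (m+1)) ^ 2 := by ring
        _ = (2*(m+1)+1) * (2 * (2*m+1) * centralBinom m) ^ 2 := by rw [h]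
        _ = (4 * (2*m+1) * (2*m+3)) * ((2*m+1) * centralBinom m ^ 2) := by ring
        _ ≤ (4 * (2*m+1) * (2*m+3)) * 16 ^ m := Nat.mul_le_mul_left _ ih
        _ ≤ (16 * (m+1)^2) * 16 ^ m := by
            have : 4 * (2*m+1) * (2*m+3) ≤ 16 * (m+1)^2 := by nlinarith
            exact Nat.mul_le_mul_right _ this
        _ = 16 ^ (m+1) * (m+1)^2 := by ring
    exact Nat.le_of_mul_le_mul_right key (by positivity)

/-- Key inequality: `(2j+1)·C(2m+1, m-j) ≤ 2·4^m`. -/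
lemma deg_key_ineq (m j : ℕ) (hm : 1 ≤ m) (hj : j ≤ m) :
    (2*j+1) * Nat.choose (2*m+1) (m - j) ≤ 2 * 4 ^ m := by
  set X := (2*j+1) * Nat.choose (2*m+1) (m - j) with hX
  set F := (m - j)! * (m + 1 + j)! with hF
  have hFpos : 0 < F := by positivity
  have c1 : Nat.choose (2*m+1) (m - j) * (m - j)! * (m + 1 + j)! = (2*m+1)! := by
    have h := Nat.choose_mul_factorial_mul_factorial (show m - j ≤ 2*m+1 by omega)
    rwa [show 2*m+1 - (m - j) = m + 1 + j by omega] at h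
  have c2 : Nat.choose (2*m+1) m * m ! * (m+1)! = (2*m+1)! := by
    have h := Nat.choose_mul_factorial_mul_factorial (show m ≤ 2*m+1 by omega)
    rwa [show 2*m+1 - m = m + 1 by omega] at h
  have step1 : X ^ 2 * F ^ 2 ≤ ((2*m+1) * Nat.choose (2*m+1) m ^ 2) * F ^ 2 := by
    calc X ^ 2 * F ^ 2
        = (2*j+1)^2 * (Nat.choose (2*m+1) (m-j) * (m-j)! * (m+1+j)!)^2 := by
          rw [hX, hF]; ring
      _ = (2*j+1)^2 * (Nat.choose (2*m+1) m * m ! * (m+1)!)^2 := by rw [c1, c2]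
      _ = Nat.choose (2*m+1) m ^ 2 * ((2*j+1)^2 * (m ! * (m+1)!)^2) := by ring
      _ ≤ Nat.choose (2*m+1) m ^ 2 * ((2*m+1) * F ^ 2) :=
          Nat.mul_le_mul_left _ (deg_QN m j hm hj)
      _ = ((2*m+1) * Nat.choose (2*m+1) m ^ 2) * F ^ 2 := by ring
  have step1' : X ^ 2 ≤ (2*m+1) * Nat.choose (2*m+1) m ^ 2 :=
    Nat.le_of_mul_le_mul_right (by simpa [pow_two] using step1) (by positivity)
  have c3 : Nat.choose (2*m+1) m * (m+1) = (2*m+1) * centralBinom m := by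
    have hcb : centralBinom m * m ! * m ! = (2*m)! := by
      have h := Nat.choose_mul_factorial_mul_factorial (show m ≤ 2*m by omega)
      rw [Nat.centralBinom]
      rwa [show 2*m - m = m by omega] at h
    have e : (Nat.choose (2*m+1) m * (m+1)) * (m ! * m !)
        = ((2*m+1) * centralBinom m) * (m ! * m !) := by
      calc (Nat.choose (2*m+1) m * (m+1)) * (m ! * m !)
          = Nat.choose (2*m+1) m * m ! * ((m+1) * m !) := by ring
        _ = Nat.choose (2*m+1) m * m ! * (m+1)! := by rw [Nat.factorial_succ]
        _ = (2*m+1)! := c2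
        _ = (2*m+1) * (2*m)! := Nat.factorial_succ (2*m)
        _ = (2*m+1) * (centralBinom m * m ! * m !) := by rw [hcb]
        _ = ((2*m+1) * centralBinom m) * (m ! * m !) := by ring
    exact Nat.eq_of_mul_eq_mul_right (by positivity) e
  have step2 : X ^ 2 * (m+1)^2 ≤ (2 * 4 ^ m)^2 * (m+1)^2 := by
    calc X ^ 2 * (m+1)^2
        ≤ ((2*m+1) * Nat.choose (2*m+1) m ^ 2) * (m+1)^2 :=
          Nat.mul_le_mul_right _ step1'
      _ = (2*m+1) * (Nat.choose (2*m+1) m * (m+1))^2 := by ring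
      _ = (2*m+1) * ((2*m+1) * centralBinom m)^2 := by rw [c3]
      _ = (2*m+1)^2 * ((2*m+1) * centralBinom m ^ 2) := by ring
      _ ≤ (2*m+1)^2 * 16 ^ m := Nat.mul_le_mul_left _ (deg_wallis m)
      _ ≤ (2*(m+1))^2 * 16 ^ m := by
          have : (2*m+1)^2 ≤ (2*(m+1))^2 := Nat.pow_le_pow_left (by omega) 2
          exact Nat.mul_le_mul_right _ this
      _ = (2 * 4 ^ m)^2 * (m+1)^2 := by
          rw [mul_pow, mul_pow, ← pow_mul, show 16 = 4^2 by norm_num, ← pow_mul]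
          ring
  have hsq : X ^ 2 ≤ (2 * 4 ^ m) ^ 2 :=
    Nat.le_of_mul_le_mul_right step2 (by positivity)
  exact Nat.pow_le_pow_iff_left (by norm_num) |>.mp hsq

/-- The degeneracy `d_j = N!(2j+1)/((N/2-j)!(N/2+j+1)!)` of the collective
angular-momentum-`j` subspace of `N` spin-1/2 particles (as a rational number). -/
noncomputable def degeneracy (N j : ℕ) : ℚ :=
  (Nat.factorial N : ℚ) * (2 * (j : ℚ) + 1) /
    ((Nat.factorial (N / 2 - j) : ℚ) * (Nat.factorial (N / 2 + j + 1) : ℚ))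

/-- there is a constant `C > 0` such that for every even `N ≥ 2` and every
`0 ≤ j ≤ N/2`, the degeneracy satisfies `d_j ≤ C · 2^N / N`: every single angular
momentum subspace carries an `O(1/N)` fraction of the `2^N` spin states, uniformly
in `j`. -/
theorem degeneracy_le_const_mul_two_pow_div :
    ∃ C : ℚ, 0 < C ∧ ∀ N j : ℕ, 2 ≤ N → Even N → j ≤ N / 2 →
      degeneracy N j ≤ C * 2 ^ N / N := by
  refine ⟨2, by norm_num, ?_⟩
  intro N j hN hEven hj
  obtain ⟨m, hm⟩ : ∃ m, N = 2 * m := by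
    obtain ⟨k, hk⟩ := hEven; exact ⟨k, by omega⟩
  have hm1 : 1 ≤ m := by omega
  have hhalf : N / 2 = m := by omega
  rw [hhalf] at hj
  have c1 : Nat.choose (2*m+1) (m - j) * (m - j)! * (m + 1 + j)! = (2*m+1)! := by
    have h := Nat.choose_mul_factorial_mul_factorial (show m - j ≤ 2*m+1 by omega)
    rwa [show 2*m+1 - (m - j) = m + 1 + j by omega] at h
  have hnat : (2*j+1) * N ! * N ≤ 2 * 2 ^ N * ((m - j)! * (m + j + 1)!) := by
    have h1 : (2*j+1) * Nat.choose (2*m+1) (m - j) * ((m - j)! * (m + 1 + j)!)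
        ≤ 2 * 4 ^ m * ((m - j)! * (m + 1 + j)!) :=
      Nat.mul_le_mul_right _ (deg_key_ineq m j hm1 hj)
    have h2 : (2*j+1) * (2*m+1)! ≤ 2 * 4 ^ m * ((m - j)! * (m + 1 + j)!) := by
      calc (2*j+1) * (2*m+1)!
          = (2*j+1) * (Nat.choose (2*m+1) (m - j) * (m - j)! * (m + 1 + j)!) := by
            rw [c1]
        _ = (2*j+1) * Nat.choose (2*m+1) (m - j) * ((m - j)! * (m + 1 + j)!) := by ring
        _ ≤ 2 * 4 ^ m * ((m - j)! * (m + 1 + j)!) := h1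
    have h3 : (2*m+1)! = (2*m+1) * (2*m)! := Nat.factorial_succ (2*m)
    have h4 : (2*j+1) * N ! * N ≤ (2*j+1) * (2*m+1)! := by
      rw [hm, h3]
      calc (2*j+1) * (2*m)! * (2*m) ≤ (2*j+1) * (2*m)! * (2*m+1) :=
            Nat.mul_le_mul_left _ (by omega)
        _ = (2*j+1) * ((2*m+1) * (2*m)!) := by ring
    have h5 : 2 ^ N = 4 ^ m := by
      rw [hm, pow_mul]; norm_num
    rw [h5, show m + j + 1 = m + 1 + j by omega]
    exact le_trans h4 h2
  unfold degeneracy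
  rw [hhalf]
  have hden : (0:ℚ) < ((m - j)! : ℚ) * ((m + j + 1)! : ℚ) := by positivity
  have hNpos : (0:ℚ) < (N:ℚ) := by exact_mod_cast (by omega : 0 < N)
  rw [div_le_div_iff₀ hden hNpos]
  have hq : (((2*j+1) * N ! * N : ℕ) : ℚ)
      ≤ ((2 * 2 ^ N * ((m - j)! * (m + j + 1)!) : ℕ) : ℚ) := by
    exact_mod_cast hnat
  push_cast at hq
  nlinarith [hq]
end

section
/- Let k ≥ 3 be a natural number and let M(k) be the 4×4 real symmetric matrix with zero diagonal and off-diagonal entries M₁₂ = M₂₁ = √(3k), M₂₃ = M₃₂ = 2√(k−1), M₃₄ = M₄₃ = √(3(k−2)), all other entries zero. Then the characteristic polynomial of M(k) is X⁴ − 10(k−1)·X² + 9k(k−2), and the eigenvalues of M(k) are exactly the four real numbers ±√(5(k−1) ± √(16k² − 32k + 25)). -/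
open Polynomial

/-- The Dicke (`j = 3/2`) block of the `N = 3` Tavis–Cummings interaction Hamiltonian at
excitation number `k`: the `4 × 4` real symmetric matrix with zero diagonal and
off-diagonal entries `√(3k)`, `2√(k-1)`, `√(3(k-2))`. -/
noncomputable def dickeBlock3 (k : ℕ) : Matrix (Fin 4) (Fin 4) ℝ :=
  !![0, Real.sqrt (3 * (k : ℝ)), 0, 0;
     Real.sqrt (3 * (k : ℝ)), 0, 2 * Real.sqrt ((k : ℝ) - 1), 0;
     0, 2 * Real.sqrt ((k : ℝ) - 1), 0, Real.sqrt (3 * ((k : ℝ) - 2));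
     0, 0, Real.sqrt (3 * ((k : ℝ) - 2)), 0]

lemma tridiag4_charpoly (a b c : ℝ) :
    (!![0, a, 0, 0; a, 0, b, 0; 0, b, 0, c; 0, 0, c, 0] : Matrix (Fin 4) (Fin 4) ℝ).charpoly
    = X ^ 4 - C (a ^ 2 + b ^ 2 + c ^ 2) * X ^ 2 + C (a ^ 2 * c ^ 2) := by
  rw [Matrix.charpoly]
  have h : (!![0, a, 0, 0; a, 0, b, 0; 0, b, 0, c; 0, 0, c, 0] : Matrix (Fin 4) (Fin 4) ℝ).charmatrix
      = !![X, -C a, 0, 0; -C a, X, -C b, 0; 0, -C b, X, -C c; 0, 0, -C c, X] := by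
    ext i j
    fin_cases i <;> fin_cases j <;>
      simp [Matrix.charmatrix_apply, Matrix.one_apply, Matrix.vecHead, Matrix.vecTail]
  rw [h]
  simp [Matrix.det_succ_row_zero, Fin.sum_univ_succ, Fin.succAbove]
  ring

/-- for `k ≥ 3`, the characteristic polynomial of the matrix `M(k)` above
is `X⁴ - 10(k-1)X² + 9k(k-2)`, and its eigenvalues are exactly the four real numbers
`±√(5(k-1) ± √(16k² - 32k + 25))`. -/
theorem dickeBlock3_charpoly_and_eigenvalues (k : ℕ) (hk : 3 ≤ k) :
    (dickeBlock3 k).charpoly =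
        X ^ 4 - C (10 * ((k : ℝ) - 1)) * X ^ 2 + C (9 * (k : ℝ) * ((k : ℝ) - 2)) ∧
      ∀ x : ℝ, (dickeBlock3 k).charpoly.IsRoot x ↔
        (x = Real.sqrt (5 * ((k : ℝ) - 1) + Real.sqrt (16 * (k : ℝ) ^ 2 - 32 * (k : ℝ) + 25)) ∨
         x = -Real.sqrt (5 * ((k : ℝ) - 1) + Real.sqrt (16 * (k : ℝ) ^ 2 - 32 * (k : ℝ) + 25)) ∨
         x = Real.sqrt (5 * ((k : ℝ) - 1) - Real.sqrt (16 * (k : ℝ) ^ 2 - 32 * (k : ℝ) + 25)) ∨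
         x = -Real.sqrt (5 * ((k : ℝ) - 1) - Real.sqrt (16 * (k : ℝ) ^ 2 - 32 * (k : ℝ) + 25))) := by
  set K : ℝ := (k : ℝ) with hKdef
  have hK : (3 : ℝ) ≤ K := by rw [hKdef]; exact_mod_cast hk
  have ha : Real.sqrt (3 * K) ^ 2 = 3 * K := Real.sq_sqrt (by linarith)
  have hb : (2 * Real.sqrt (K - 1)) ^ 2 = 4 * (K - 1) := by
    rw [mul_pow, Real.sq_sqrt (by linarith)]; ring
  have hc : Real.sqrt (3 * (K - 2)) ^ 2 = 3 * (K - 2) := Real.sq_sqrt (by linarith)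
  have hchar : (dickeBlock3 k).charpoly =
      X ^ 4 - C (10 * (K - 1)) * X ^ 2 + C (9 * K * (K - 2)) := by
    rw [dickeBlock3, tridiag4_charpoly, ha, hb, hc,
      show 3 * K + 4 * (K - 1) + 3 * (K - 2) = 10 * (K - 1) by ring,
      show 3 * K * (3 * (K - 2)) = 9 * K * (K - 2) by ring]
  refine ⟨hchar, fun x => ?_⟩
  set s : ℝ := Real.sqrt (16 * K ^ 2 - 32 * K + 25) with hsdef
  have hDpos : (0 : ℝ) ≤ 16 * K ^ 2 - 32 * K + 25 := by nlinarith
  have hs : s ^ 2 = 16 * K ^ 2 - 32 * K + 25 := Real.sq_sqrt hDpos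
  have hs0 : 0 ≤ s := Real.sqrt_nonneg _
  have hsle : s ≤ 5 * (K - 1) := by
    have h1 : Real.sqrt (16 * K ^ 2 - 32 * K + 25) ≤ Real.sqrt ((5 * (K - 1)) ^ 2) :=
      Real.sqrt_le_sqrt (by nlinarith)
    rwa [Real.sqrt_sq (by linarith)] at h1
  set p : ℝ := Real.sqrt (5 * (K - 1) + s) with hpdef
  set q : ℝ := Real.sqrt (5 * (K - 1) - s) with hqdef
  have hp : p ^ 2 = 5 * (K - 1) + s := Real.sq_sqrt (by linarith)
  have hq : q ^ 2 = 5 * (K - 1) - s := Real.sq_sqrt (by linarith)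
  have factor : x ^ 4 - 10 * (K - 1) * x ^ 2 + 9 * K * (K - 2)
      = (x - p) * (x + p) * ((x - q) * (x + q)) := by
    linear_combination (x ^ 2 - q ^ 2) * hp + (x ^ 2 - (5 * (K - 1) + s)) * hq + hs
  rw [hchar, IsRoot]
  simp only [eval_add, eval_sub, eval_mul, eval_pow, eval_X, eval_C]
  rw [factor, mul_eq_zero, mul_eq_zero, mul_eq_zero, sub_eq_zero, sub_eq_zero,
    add_eq_zero_iff_eq_neg, add_eq_zero_iff_eq_neg]
  rw [or_assoc]
end
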